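/- arXiv:2202.05238 — 2 statements merged into one kernel-verified Lean document; each statement's English description precedes it below -/
import Mathlib

section
/- For every m ≥ 1, the number SSCS(2m+1) of distinct score sequences of length 2m+1 that are both strong and self-complementary satisfies SSCS(2m+1) = ∑_{T=C(m,2)+1}^{m^2} ∑_{E=⌈T/m⌉}^{m} G_m[T, E]. -/
/-- A score sequence of length `n`: nondecreasing, partial sums `≥ C(r,2)` for `1 ≤ r < n`,
and total sum `C(n,2)`. -/
def IsScoreSeq (l : List ℕ) : Prop :=
  l.Pairwise (· ≤ ·) ∧
  (∀ r, 1 ≤ r → r < l.length → r.choose 2 ≤ (l.take r).sum) ∧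
  l.sum = l.length.choose 2

/-- A sequence of length `n` is self-complementary if `s_{n+1-i} = n-1-s_i`
for all `1 ≤ i ≤ ⌊n/2⌋` (here `l.getD (i-1) 0` is the `i`-th term `s_i`). -/
def IsSelfCompl (l : List ℕ) : Prop :=
  ∀ i, 1 ≤ i → i ≤ l.length / 2 →
    ((l.getD (l.length - i) 0 : ℤ)) = (l.length : ℤ) - 1 - (l.getD (i - 1) 0 : ℤ)

/-- A strong score sequence of length `n`: nondecreasing, partial sums `> C(r,2)` for
`1 ≤ r < n`, and total sum `C(n,2)`. -/
def IsStrongScoreSeq (l : List ℕ) : Prop :=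
  l.Pairwise (· ≤ ·) ∧
  (∀ r, 1 ≤ r → r < l.length → r.choose 2 < (l.take r).sum) ∧
  l.sum = l.length.choose 2

/-- `G n T E` is the number of nondecreasing sequences `(s_1 ≤ ⋯ ≤ s_n)` of nonnegative
integers with `∑_{i=1}^r s_i > C(r,2)` for all `1 ≤ r < n`, total sum `T`, and last term `E`. -/
noncomputable def G (n T E : ℕ) : ℕ :=
  {l : List ℕ | l.length = n ∧ l.Pairwise (· ≤ ·) ∧
    (∀ r, 1 ≤ r → r < n → r.choose 2 < (l.take r).sum) ∧
    l.sum = T ∧ l.getLast? = some E}.ncard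

/-- `SSCS n` is the number of distinct score sequences of length `n` that are both strong
and self-complementary. -/
noncomputable def SSCS (n : ℕ) : ℕ :=
  {l : List ℕ | l.length = n ∧ IsStrongScoreSeq l ∧ IsSelfCompl l}.ncard

/- ### Auxiliary material -/

lemma choose_two_add (a b : ℕ) : (a + b).choose 2 = a.choose 2 + b.choose 2 + a * b := by
  induction b with
  | zero => simp
  | succ b ih =>
    have h2 : ∀ n : ℕ, (n+1).choose 2 = n.choose 2 + n := by
      intro n
      rw [Nat.choose_succ_succ]
      simp [Nat.choose_one_right, Nat.add_comm]
    rw [show (a + (b+1)) = (a + b) + 1 by ring, h2, ih, h2 b]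
    ring

lemma choose_two_odd (m : ℕ) : (2*m+1).choose 2 = 2*m*m + m := by
  rw [Nat.choose_two_right]
  rw [show (2*m+1) * (2*m+1-1) = (2*m*m + m) * 2 by simp only [Nat.add_sub_cancel]; ring,
    Nat.mul_div_cancel _ (by norm_num)]

lemma choose_key (a j : ℕ) : (a + j + 1 + j).choose 2 = a.choose 2 + (a + j) + 2*((a+j)*j) := by
  rw [show a+j+1+j = a + (2*j+1) by ring, choose_two_add, choose_two_odd]
  ring

lemma sum_map_sub (k : ℕ) : ∀ (s : List ℕ), (∀ x ∈ s, x ≤ k) →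
    (s.map (fun x => k - x)).sum + s.sum = k * s.length := by
  intro s
  induction s with
  | nil => simp
  | cons a t ih =>
    intro h
    have ha : a ≤ k := h a (by simp)
    have := ih (fun x hx => h x (by simp [hx]))
    simp only [List.map_cons, List.sum_cons, List.length_cons, Nat.mul_succ]
    omega

lemma ncard_biUnion {α β : Type*} (s : Finset β) (f : β → Set α)
    (hf : ∀ b ∈ s, (f b).Finite)
    (hd : ∀ b ∈ s, ∀ c ∈ s, b ≠ c → Disjoint (f b) (f c)) :
    (⋃ b ∈ s, f b).ncard = ∑ b ∈ s, (f b).ncard := by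
  classical
  induction s using Finset.induction with
  | empty => simp
  | @insert a s' hb ih =>
    rw [Finset.sum_insert hb]
    have h1 : (⋃ b ∈ insert a s', f b) = f a ∪ ⋃ b ∈ s', f b := by
      simp [Set.biUnion_insert]
    have hfa : (f a).Finite := hf a (by simp)
    have hfU : (⋃ b ∈ s', f b).Finite := by
      apply Set.Finite.biUnion (s'.finite_toSet)
      intro b hbs
      exact hf b (Finset.mem_insert_of_mem (Finset.mem_coe.mp hbs))
    have hdis : Disjoint (f a) (⋃ b ∈ s', f b) := by
      apply Set.disjoint_iUnion₂_right.mpr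
      intro b hbs
      exact hd a (by simp) b (Finset.mem_insert_of_mem hbs) (by rintro rfl; exact hb hbs)
    rw [h1, Set.ncard_union_eq hdis hfa hfU,
      ih (fun b hbs => hf b (by simp [hbs]))
        (fun b hbs c hcs hbc => hd b (by simp [hbs]) c (by simp [hcs]) hbc)]

/-- The set counted by `G m T E`. -/
def GSet (m T E : ℕ) : Set (List ℕ) :=
  {l : List ℕ | l.length = m ∧ l.Pairwise (· ≤ ·) ∧
    (∀ r, 1 ≤ r → r < m → r.choose 2 < (l.take r).sum) ∧
    l.sum = T ∧ l.getLast? = some E}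

lemma G_eq (m T E : ℕ) : G m T E = (GSet m T E).ncard := rfl

lemma sorted_le_getLast {l : List ℕ} {E : ℕ} (hs : l.Pairwise (· ≤ ·))
    (hE : l.getLast? = some E) : ∀ x ∈ l, x ≤ E := by
  intro x hx
  obtain ⟨ys, rfl⟩ := List.getLast?_eq_some_iff.mp hE
  rcases List.mem_append.mp hx with h | h
  · exact (List.pairwise_append.mp hs).2.2 x h E (by simp)
  · simp_all

lemma GSet_finite (m T E : ℕ) : (GSet m T E).Finite := by
  apply Set.Finite.subset (Set.Finite.image
    (fun v : List.Vector (Fin (T+1)) m => (v.toList.map Fin.val)) (Set.finite_univ))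
  rintro l ⟨hlen, hs, hstr, hsum, hE⟩
  have hb : ∀ x ∈ l, x ≤ T := fun x hx =>
    hsum ▸ List.single_le_sum (fun y _ => Nat.zero_le y) x hx
  refine ⟨⟨l.map (fun x => (⟨min x T, by omega⟩ : Fin (T+1))), by simp [hlen]⟩, trivial, ?_⟩
  simp only [List.Vector.toList, List.map_map]
  calc (l.map fun x => min x T) = l.map id := by
        apply List.map_congr_left
        intro x hx
        simp [Nat.min_eq_left (hb x hx)]
    _ = l := by simp

/-- If the last term is too small for the sum, `GSet` is empty. -/
lemma GSet_empty {m T E : ℕ} (h : m * E < T) : GSet m T E = ∅ := by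
  ext l
  simp only [Set.mem_empty_iff_false, iff_false]
  rintro ⟨hlen, hs, hstr, hsum, hE⟩
  have hb : ∀ x ∈ l, x ≤ E := sorted_le_getLast hs hE
  have := List.sum_le_card_nsmul l E hb
  rw [hsum, hlen, smul_eq_mul] at this
  omega

/-- The doubling map. -/
def Phi (m : ℕ) (l : List ℕ) : List ℕ := l ++ m :: (l.reverse.map (fun s => 2*m - s))

lemma Phi_length {m : ℕ} (l : List ℕ) (hlen : l.length = m) :
    (Phi m l).length = 2*m + 1 := by
  simp [Phi, hlen]; omega

lemma Phi_getD_low {m j : ℕ} {l : List ℕ} (hlen : l.length = m) (hj : j < m) :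
    (Phi m l).getD j 0 = l.getD j 0 :=
  List.getD_append _ _ _ _ (by omega)

lemma Phi_getD_mid {m : ℕ} {l : List ℕ} (hlen : l.length = m) :
    (Phi m l).getD m 0 = m := by
  rw [Phi, List.getD_append_right _ _ _ _ (by omega), hlen]
  simp

lemma Phi_getD_high {m j : ℕ} {l : List ℕ} (hlen : l.length = m) (hj : j < m) :
    (Phi m l).getD (m+1+j) 0 = 2*m - l.getD (m-1-j) 0 := by
  subst hlen
  rw [Phi, List.getD_append_right _ _ _ _ (by omega),
    show l.length+1+j - l.length = j+1 from by omega]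
  rw [show ∀ (a : ℕ) (t : List ℕ), (a :: t).getD (j+1) 0 = t.getD j 0 from
    fun a t => rfl]
  have hjlen : j < (l.reverse.map (fun s => 2*(l.length) - s)).length := by simp [hj]
  rw [List.getD_eq_getElem _ _ hjlen, List.getElem_map, List.getElem_reverse,
    List.getD_eq_getElem _ _ (by omega)]

lemma Phi_take_sum {m j T : ℕ} {l : List ℕ} (hlen : l.length = m) (hj : j < m)
    (hsum : l.sum = T) (hle : ∀ x ∈ l, x ≤ m) :
    ((Phi m l).take (m+1+j)).sum + (l.drop (m-j)).sum = T + m + 2*(m*j) := by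
  have h1 : (Phi m l).take (m+1+j) =
      l ++ m :: ((l.reverse.map (fun s => 2*m - s)).take j) := by
    rw [Phi, List.take_append, List.take_of_length_le (by omega),
      show m+1+j - l.length = j+1 from by omega]
    rfl
  have h2 : (l.reverse.map (fun s => 2*m - s)).take j
      = ((l.drop (m-j)).reverse.map (fun s => 2*m - s)) := by
    rw [← List.map_take, List.take_reverse, hlen]
  have h3 : ((l.drop (m-j)).reverse.map (fun s => 2*m - s)).sum
      + (l.drop (m-j)).sum = 2*(m*j) := by
    have := sum_map_sub (2*m) (l.drop (m-j)).reverse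
      (fun x hx => by
        have := hle x (List.mem_of_mem_drop (List.mem_reverse.mp hx)); omega)
    rw [List.sum_reverse, List.length_reverse, List.length_drop, hlen,
      show m - (m-j) = j from by omega] at this
    rw [this]; ring
  rw [h1, h2, List.sum_append, List.sum_cons, hsum]
  omega

/-- Forward direction: `Phi` sends good half-sequences to strong self-complementary
score sequences. -/
lemma Phi_forward {m T E : ℕ} (hm : 1 ≤ m) (hT : m.choose 2 < T) (hEm : E ≤ m)
    {l : List ℕ} (hl : l ∈ GSet m T E) :
    (Phi m l).length = 2*m+1 ∧ IsStrongScoreSeq (Phi m l) ∧ IsSelfCompl (Phi m l) := by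
  obtain ⟨hlen, hsort, hstr, hsum, hlast⟩ := hl
  have hle : ∀ x ∈ l, x ≤ m := fun x hx => (sorted_le_getLast hsort hlast x hx).trans hEm
  have hPlen : (Phi m l).length = 2*m+1 := Phi_length l hlen
  refine ⟨hPlen, ⟨?_, ?_, ?_⟩, ?_⟩
  · -- sorted
    rw [Phi, List.pairwise_append]
    refine ⟨hsort, ?_, ?_⟩
    · rw [List.pairwise_cons]
      constructor
      · intro b hb
        simp only [List.mem_map, List.mem_reverse] at hb
        obtain ⟨y, hy, rfl⟩ := hb
        have := hle y hy; omega
      · apply List.Pairwise.map _ ?_ (List.pairwise_reverse.mpr hsort)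
        intro a b hab
        exact Nat.sub_le_sub_left hab _
    · intro a ha b hb
      rcases List.mem_cons.mp hb with rfl | hb
      · exact hle a ha
      · simp only [List.mem_map, List.mem_reverse] at hb
        obtain ⟨y, hy, rfl⟩ := hb
        have h1 := hle a ha
        have h2 := hle y hy
        omega
  · -- strong partial sums
    intro r h1 h2
    rw [hPlen] at h2
    rcases le_or_gt r m with hr | hr
    · have he : (Phi m l).take r = l.take r :=
        List.take_append_of_le_length (by omega)
      rw [he]
      rcases eq_or_lt_of_le hr with rfl | hrm
      · rwa [show l.take r = l from by rw [← hlen]; exact List.take_length (l := l), hsum]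
      · exact hstr r h1 hrm
    · set j := r - (m+1) with hjdef
      have hj : j < m := by omega
      have hr' : r = m+1+j := by omega
      have key := Phi_take_sum hlen hj hsum hle
      have hsplit := List.sum_take_add_sum_drop l (m-j)
      rw [hsum] at hsplit
      have ht : (m-j).choose 2 < (l.take (m-j)).sum := by
        rcases eq_or_lt_of_le (Nat.sub_le m j) with heq | hlt
        · rw [heq, show l.take m = l from by rw [← hlen]; exact List.take_length (l := l), hsum]
          exact hT
        · exact hstr (m-j) (by omega) hlt
      have hkey : (m+1+j).choose 2 = (m-j).choose 2 + m + 2*(m*j) := by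
        have := choose_key (m-j) j
        rw [show (m-j)+j+1+j = m+1+j from by omega, show (m-j)+j = m from by omega] at this
        exact this
      rw [hr', hkey]
      linarith [key, hsplit, ht]
  · -- total sum
    have hcsum : (l.reverse.map (fun s => 2*m - s)).sum + T = 2*(m*m) := by
      have := sum_map_sub (2*m) l.reverse
        (fun x hx => by have := hle x (List.mem_reverse.mp hx); omega)
      rw [List.sum_reverse, List.length_reverse, hlen, hsum] at this
      rw [this]; ring
    rw [hPlen, choose_two_odd, Phi, List.sum_append, List.sum_cons, hsum]
    have : 2*m*m = 2*(m*m) := by ring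
    omega
  · -- self-complementary
    intro i hi1 hi2
    rw [hPlen] at hi2
    have him : i ≤ m := by omega
    rw [hPlen, show 2*m+1-i = m+1+(m-i) from by omega,
      Phi_getD_high hlen (by omega), Phi_getD_low hlen (by omega),
      show m-1-(m-i) = i-1 from by omega]
    have hb : l.getD (i-1) 0 ≤ m := by
      rcases Nat.lt_or_ge (i-1) l.length with h | h
      · rw [List.getD_eq_getElem _ _ h]
        exact hle _ (List.getElem_mem h)
      · rw [List.getD_eq_default _ _ h]; omega
    have : (2*m - l.getD (i-1) 0 : ℕ) = (2*m : ℕ) - (l.getD (i-1) 0 : ℕ) := rfl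
    push_cast [Nat.cast_sub (by omega : l.getD (i-1) 0 ≤ 2*m)]
    ring

/-- Backward direction. -/
lemma Phi_backward {m : ℕ} (hm : 1 ≤ m) {l : List ℕ} (hlen : l.length = 2*m+1)
    (hstrong : IsStrongScoreSeq l) (hsc : IsSelfCompl l) :
    m.choose 2 < (l.take m).sum ∧ (l.take m).sum ≤ m^2 ∧ l.getD (m-1) 0 ≤ m ∧
    l.take m ∈ GSet m ((l.take m).sum) (l.getD (m-1) 0) ∧ Phi m (l.take m) = l := by
  obtain ⟨hsort, hstr, hsum⟩ := hstrong
  set t := l.take m with htdef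
  have htlen : t.length = m := by
    rw [htdef, List.length_take, hlen]; omega
  have htget : ∀ j, j < m → t.getD j 0 = l.getD j 0 := by
    intro j hj
    rw [List.getD_eq_getElem _ _ (by omega), List.getD_eq_getElem _ _ (by omega)]
    exact List.getElem_take
  -- the self-complementarity conditions, reindexed
  have hind : ∀ j, j < m → (l.getD (m+1+j) 0 : ℤ) = 2*m - l.getD (m-1-j) 0 := by
    intro j hj
    have := hsc (m-j) (by omega) (by rw [hlen]; omega)
    rw [hlen, show 2*m+1 - (m-j) = m+1+j from by omega,
      show m-j-1 = m-1-j from by omega] at this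
    rw [this]
    push_cast
    ring
  have hble : ∀ k, k < m → l.getD k 0 ≤ 2*m := by
    intro k hk
    have := hind (m-1-k) (by omega)
    rw [show m-1-(m-1-k) = k from by omega] at this
    omega
  have htble : ∀ x ∈ t, x ≤ 2*m := by
    intro x hx
    obtain ⟨k, hk, rfl⟩ := List.mem_iff_getElem.mp hx
    rw [← List.getD_eq_getElem t 0 hk]
    rw [htlen] at hk
    rw [htget k hk]
    exact hble k hk
  -- the tail of l is the reverse complement of t
  have hdrop : l.drop (m+1) = t.reverse.map (fun s => 2*m - s) := by
    apply List.ext_getElem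
    · simp only [List.length_drop, List.length_map, List.length_reverse, htlen, hlen]
      omega
    · intro j h1 h2
      have hj : j < m := by
        have := h1
        simp only [List.length_drop, hlen] at this
        omega
      rw [List.getElem_drop, List.getElem_map, List.getElem_reverse]
      have e1 : l[m+1+j]'(by omega) = l.getD (m+1+j) 0 :=
        (List.getD_eq_getElem _ _ (by omega)).symm
      have e2 : t[t.length-1-j]'(by omega) = l.getD (m-1-j) 0 := by
        rw [← List.getD_eq_getElem t 0 (by omega), htlen, htget (m-1-j) (by omega)]
      rw [e1, e2]
      have h3 := hind j hj
      have h4 := hble (m-1-j) (by omega)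
      omega
  -- total sum of l
  have hsuml : l.sum = 2*(m*m) + m := by
    rw [hsum, hlen, choose_two_odd]; ring_nf
  -- complement sum
  have hcsum : (t.reverse.map (fun s => 2*m - s)).sum + t.sum = 2*(m*m) := by
    have := sum_map_sub (2*m) t.reverse (fun x hx => htble x (List.mem_reverse.mp hx))
    rw [List.sum_reverse, List.length_reverse, htlen] at this
    rw [this]; ring
  -- middle element
  have hmlt : m < l.length := by omega
  have hdecomp : l = t ++ l.getD m 0 :: l.drop (m+1) := by
    conv_lhs => rw [← List.take_append_drop m l]
    rw [List.drop_eq_getElem_cons hmlt, List.getD_eq_getElem _ _ hmlt]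
  have hsum_split : l.sum = t.sum + (l.getD m 0 + (l.drop (m+1)).sum) := by
    conv_lhs => rw [hdecomp]
    rw [List.sum_append, List.sum_cons]
  have hmid : l.getD m 0 = m := by
    rw [hdrop] at hsum_split
    omega
  -- last element of t
  have htne : t ≠ [] := by
    intro h; rw [h] at htlen; simp at htlen; omega
  have hlastt : t.getLast? = some (l.getD (m-1) 0) := by
    rw [List.getLast?_eq_getElem?, htlen, List.getElem?_eq_getElem (by omega),
      ← List.getD_eq_getElem t 0 (by rw [htlen]; omega), htget (m-1) (by omega)]
  -- E ≤ m
  have hsortget := List.pairwise_iff_getElem.mp hsort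
  have hEm : l.getD (m-1) 0 ≤ m := by
    have := hsortget (m-1) m (by omega) (by omega) (by omega)
    rw [← List.getD_eq_getElem l 0 (by omega : m-1 < l.length),
      ← List.getD_eq_getElem l 0 hmlt, hmid] at this
    exact this
  -- t sorted
  have htsort : t.Pairwise (· ≤ ·) := List.Pairwise.sublist (List.take_sublist m l) hsort
  -- t strong
  have htstr : ∀ r, 1 ≤ r → r < m → r.choose 2 < (t.take r).sum := by
    intro r h1 h2
    rw [htdef, List.take_take, min_eq_left (le_of_lt h2)]
    exact hstr r h1 (by omega)
  -- T bounds
  have hT : m.choose 2 < t.sum := by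
    have := hstr m hm (by omega)
    rwa [← htdef] at this
  have hT2 : t.sum ≤ m^2 := by
    have hbE : ∀ x ∈ t, x ≤ m := by
      intro x hx
      exact (sorted_le_getLast htsort hlastt x hx).trans hEm
    have := List.sum_le_card_nsmul t m hbE
    rw [htlen, smul_eq_mul] at this
    rw [pow_two]
    exact this
  refine ⟨hT, hT2, hEm, ⟨htlen, htsort, htstr, rfl, hlastt⟩, ?_⟩
  rw [hmid] at hdecomp
  rw [Phi, ← hdrop]
  exact hdecomp.symm

/-- `SSCS(2m+1) = ∑_{T=C(m,2)+1}^{m²} ∑_{E=⌈T/m⌉}^{m} G_m[T,E]` for `m ≥ 1`. -/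
theorem SSCS_odd (m : ℕ) (hm : 1 ≤ m) :
    SSCS (2 * m + 1) =
      ∑ T ∈ Finset.Icc (m.choose 2 + 1) (m ^ 2),
        ∑ E ∈ Finset.Icc ((T + m - 1) / m) m, G m T E := by
  classical
  set rect : Finset (ℕ × ℕ) :=
    (Finset.Icc (m.choose 2 + 1) (m ^ 2)) ×ˢ (Finset.Icc 0 m) with hrect
  set B : Set (List ℕ) := ⋃ p ∈ rect, GSet m p.1 p.2 with hB
  have memB_len : ∀ l ∈ B, l.length = m := by
    intro l hl
    rw [hB] at hl
    obtain ⟨p, _, hmem⟩ := Set.mem_iUnion₂.mp hl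
    exact hmem.1
  have hA : {l : List ℕ | l.length = 2*m+1 ∧ IsStrongScoreSeq l ∧ IsSelfCompl l}
      = Phi m '' B := by
    ext l
    simp only [Set.mem_setOf_eq, Set.mem_image]
    constructor
    · rintro ⟨hlen, hstrong, hsc⟩
      obtain ⟨hT, hT2, hEm, hmem, hphi⟩ := Phi_backward hm hlen hstrong hsc
      refine ⟨l.take m, ?_, hphi⟩
      rw [hB]
      refine Set.mem_iUnion₂.mpr ⟨((l.take m).sum, l.getD (m-1) 0), ?_, hmem⟩
      rw [hrect]
      simp only [Finset.mem_product, Finset.mem_Icc]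
      omega
    · rintro ⟨t, htB, rfl⟩
      rw [hB] at htB
      obtain ⟨p, hp, hmem⟩ := Set.mem_iUnion₂.mp htB
      rw [hrect] at hp
      simp only [Finset.mem_product, Finset.mem_Icc] at hp
      exact Phi_forward hm (by omega) hp.2.2 hmem
  have hinj : Set.InjOn (Phi m) B := by
    intro l1 h1 l2 h2 heq
    have e1 : l1 = (Phi m l1).take m := (List.take_left' (memB_len l1 h1)).symm
    have e2 : l2 = (Phi m l2).take m := (List.take_left' (memB_len l2 h2)).symm
    rw [e1, e2, heq]
  have hBcard : B.ncard = ∑ p ∈ rect, (GSet m p.1 p.2).ncard := by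
    rw [hB]
    apply ncard_biUnion
    · intro p _
      exact GSet_finite m p.1 p.2
    · intro p _ q _ hpq
      rw [Set.disjoint_left]
      intro l hlp hlq
      apply hpq
      have h1 : p.1 = q.1 := by rw [← hlp.2.2.2.1, ← hlq.2.2.2.1]
      have h2 : some p.2 = some q.2 := by rw [← hlp.2.2.2.2, ← hlq.2.2.2.2]
      exact Prod.ext h1 (Option.some_injective _ h2)
  have step1 : SSCS (2*m+1) = B.ncard := by
    rw [SSCS, hA, Set.ncard_image_of_injOn hinj]
  rw [step1, hBcard, hrect, Finset.sum_product]
  apply Finset.sum_congr rfl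
  intro T hT
  rw [Finset.mem_Icc] at hT
  have hsub : Finset.Icc ((T + m - 1) / m) m ⊆ Finset.Icc 0 m := by
    intro E hE
    rw [Finset.mem_Icc] at hE ⊢
    exact ⟨Nat.zero_le _, hE.2⟩
  have hvan : ∀ E ∈ Finset.Icc 0 m, E ∉ Finset.Icc ((T + m - 1) / m) m → G m T E = 0 := by
    intro E hE hnE
    rw [Finset.mem_Icc] at hE
    rw [Finset.mem_Icc, not_and] at hnE
    have hdE : ¬ ((T + m - 1) / m ≤ E) := fun h => hnE h hE.2
    have hlt : E + 1 ≤ (T + m - 1) / m := Nat.lt_of_not_le hdE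
    have h2 : (E + 1) * m ≤ T + m - 1 := (Nat.le_div_iff_mul_le (by omega)).mp hlt
    rw [add_mul, one_mul] at h2
    have hme : m * E < T := by
      rw [mul_comm]
      have hq : E * m + m ≤ T + m - 1 := h2
      have hT1 : 1 ≤ T := by omega
      omega
    rw [G_eq, GSet_empty hme, Set.ncard_empty]
  exact (Finset.sum_subset hsub hvan).symm
end

section
/- For every m ≥ 1, the map sending a self-complementary score sequence (s_1, ..., s_{2m}) of length 2m to its first half (s_1, ..., s_m) is a bijection onto the set of nondecreasing sequences (s_1 ≤ ... ≤ s_m) of nonnegative integers satisfying ∑_{i=1}^r s_i ≥ C(r,2) for all 1 ≤ r < m, s_m ≤ m-1, and m·s_m ≥ ∑_{i=1}^m s_i ≥ C(m,2). -/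
lemma two_mul_choose_two (n : ℕ) : 2 * n.choose 2 = n * (n - 1) := by
  induction n with
  | zero => rfl
  | succ k ih =>
    have h1 : (k+1).choose 2 = k.choose 1 + k.choose 2 := Nat.choose_succ_succ k 1
    rw [Nat.choose_one_right] at h1
    rw [h1]
    cases k with
    | zero => rfl
    | succ j =>
      rw [Nat.mul_add, ih]
      simp only [Nat.add_sub_cancel]
      ring

lemma sum_map_sub_s18 (c : ℕ) (t : List ℕ) (h : ∀ x ∈ t, x ≤ c) :
    (t.map (fun x => c - x)).sum + t.sum = t.length * c := by
  induction t with
  | nil => simp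
  | cons a t ih =>
    have ha := h a (by simp)
    have ht := ih (fun x hx => h x (by simp [hx]))
    simp only [List.map_cons, List.sum_cons, List.length_cons]
    have : (t.length + 1) * c = t.length * c + c := by ring
    omega

lemma choose_shift (m k : ℕ) (hkm : k ≤ m) :
    (m+k).choose 2 = (m-k).choose 2 + k*(2*m-1) := by
  induction k with
  | zero => simp
  | succ k ih =>
    have hk : k ≤ m := by omega
    have e1 : (m+k+1).choose 2 = (m+k) + (m+k).choose 2 := by
      rw [Nat.choose_succ_succ, Nat.choose_one_right]
    have e2 : (m-k).choose 2 = (m-(k+1)) + (m-(k+1)).choose 2 := by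
      have : m - k = (m - (k+1)) + 1 := by omega
      rw [this, Nat.choose_succ_succ, Nat.choose_one_right]
    have e3 : (k+1)*(2*m-1) = k*(2*m-1) + (2*m-1) := by ring
    have := ih hk
    have e4 : m + (k+1) = (m+k)+1 := by ring
    rw [e4, e1, this, e2, e3]
    omega

lemma dom_pt (m : ℕ) (l : List ℕ) (hlen : l.length = 2*m) (hsc : IsSelfCompl l)
    (p : ℕ) (hp : p < m) :
    l.getD p 0 ≤ 2*m-1 ∧ l.getD (2*m-1-p) 0 = 2*m-1 - l.getD p 0 := by
  have h2 := hsc (p+1) (by omega) (by rw [hlen]; omega)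
  rw [hlen] at h2
  have e : 2*m - (p+1) = 2*m-1-p := by omega
  rw [e] at h2
  simp only [Nat.add_sub_cancel] at h2
  omega

/-- For `m ≥ 1`, taking the first half is a bijection from the set of self-complementary
score sequences of length `2m` onto the set of nondecreasing sequences `(s_1 ≤ ⋯ ≤ s_m)` of
nonnegative integers with `∑_{i=1}^r s_i ≥ C(r,2)` for `1 ≤ r < m`, `s_m ≤ m - 1`, and
`m·s_m ≥ ∑_{i=1}^m s_i ≥ C(m,2)`. -/
theorem selfcompl_even_half_bijection (m : ℕ) (hm : 1 ≤ m) :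
    Set.BijOn (fun l : List ℕ => l.take m)
      {l : List ℕ | l.length = 2 * m ∧ IsScoreSeq l ∧ IsSelfCompl l}
      {l : List ℕ | l.length = m ∧ l.Pairwise (· ≤ ·) ∧
        (∀ r, 1 ≤ r → r < m → r.choose 2 ≤ (l.take r).sum) ∧
        l.getD (m - 1) 0 ≤ m - 1 ∧
        m.choose 2 ≤ l.sum ∧ l.sum ≤ m * l.getD (m - 1) 0} := by
  refine ⟨?_, ?_, ?_⟩
  · -- MapsTo
    rintro l ⟨hlen, ⟨hsort, hpart, hsum⟩, hsc⟩
    have hlent : (l.take m).length = m := by simp [hlen]; omega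
    have hm1 : m - 1 < l.length := by omega
    have hmlt : m < l.length := by omega
    have hget : (l.take m).getD (m-1) 0 = l[m-1]'hm1 := by
      rw [List.getD_eq_getElem _ _ (by rw [hlent]; omega)]
      simp
    have hsorted' : ∀ i j (hi : i < l.length) (hj : j < l.length), i ≤ j → l[i] ≤ l[j] := by
      intro i j hi hj hij
      rcases Nat.eq_or_lt_of_le hij with rfl | h
      · exact le_refl _
      · exact List.pairwise_iff_getElem.mp hsort i j hi hj h
    have hbound : l[m-1]'hm1 ≤ m - 1 := by
      obtain ⟨h0, h1⟩ := dom_pt m l hlen hsc (m-1) (by omega)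
      have e : 2*m-1-(m-1) = m := by omega
      rw [e] at h1
      have hs : l.getD (m-1) 0 ≤ l.getD m 0 := by
        rw [List.getD_eq_getElem _ _ hm1, List.getD_eq_getElem _ _ hmlt]
        exact hsorted' _ _ _ _ (by omega)
      rw [List.getD_eq_getElem _ _ hm1] at h0 h1 hs
      rw [List.getD_eq_getElem _ _ hmlt] at h1 hs
      omega
    refine ⟨hlent, ?_, ?_, ?_, ?_, ?_⟩
    · exact List.Pairwise.sublist (List.take_sublist _ _) hsort
    · intro r hr hrm
      have e : (l.take m).take r = l.take r := by
        rw [List.take_take]; congr 1; omega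
      rw [e]; exact hpart r hr (by omega)
    · rw [hget]; exact hbound
    · exact hpart m hm (by omega)
    · rw [hget]
      have hall : ∀ x ∈ l.take m, x ≤ l[m-1]'hm1 := by
        intro x hx
        obtain ⟨i, hi, rfl⟩ := List.mem_iff_getElem.mp hx
        rw [List.getElem_take]
        exact hsorted' i (m-1) (by rw [hlent] at hi; omega) hm1 (by rw [hlent] at hi; omega)
      have := List.sum_le_card_nsmul (l.take m) _ hall
      rwa [hlent, smul_eq_mul] at this
  · -- InjOn
    rintro l₁ ⟨hlen₁, _, hsc₁⟩ l₂ ⟨hlen₂, _, hsc₂⟩ htake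
    simp only at htake
    apply List.ext_getElem (by rw [hlen₁, hlen₂])
    intro i hi₁ hi₂
    have hgd : ∀ p, p < m → l₁.getD p 0 = l₂.getD p 0 := by
      intro p hp
      have hp1 : p < l₁.length := by rw [hlen₁]; omega
      have hp2 : p < l₂.length := by rw [hlen₂]; omega
      have hq1 : p < (l₁.take m).length := by rw [List.length_take]; omega
      have hq2 : p < (l₂.take m).length := by rw [List.length_take]; omega
      have h1 : (l₁.take m).getD p 0 = l₁.getD p 0 := by
        rw [List.getD_eq_getElem _ 0 hq1, List.getD_eq_getElem _ 0 hp1]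
        simp
      have h2 : (l₂.take m).getD p 0 = l₂.getD p 0 := by
        rw [List.getD_eq_getElem _ 0 hq2, List.getD_eq_getElem _ 0 hp2]
        simp
      rw [← h1, ← h2, htake]
    have key : l₁.getD i 0 = l₂.getD i 0 := by
      by_cases him : i < m
      · exact hgd i him
      · have hp : 2*m-1-i < m := by rw [hlen₁] at hi₁; omega
        have e : 2*m-1-(2*m-1-i) = i := by rw [hlen₁] at hi₁; omega
        have d1 := (dom_pt m l₁ hlen₁ hsc₁ _ hp).2
        have d2 := (dom_pt m l₂ hlen₂ hsc₂ _ hp).2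
        rw [e] at d1 d2
        rw [d1, d2, hgd _ hp]
    rwa [List.getD_eq_getElem _ _ hi₁, List.getD_eq_getElem _ _ hi₂] at key
  · -- SurjOn
    rintro h ⟨hlenh, hsorth, hparth, hlast, hsumlb, hsumub⟩
    have hm1h : m - 1 < h.length := by omega
    have hgetlast : h.getD (m-1) 0 = h[m-1]'hm1h := List.getD_eq_getElem _ _ hm1h
    rw [hgetlast] at hlast hsumub
    have hsorted' : ∀ i j (hi : i < h.length) (hj : j < h.length), i ≤ j → h[i] ≤ h[j] := by
      intro i j hi hj hij
      rcases Nat.eq_or_lt_of_le hij with rfl | hlt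
      · exact le_refl _
      · exact List.pairwise_iff_getElem.mp hsorth i j hi hj hlt
    have hallm1 : ∀ x ∈ h, x ≤ m - 1 := by
      intro x hx
      obtain ⟨i, hi, rfl⟩ := List.mem_iff_getElem.mp hx
      exact le_trans (hsorted' i (m-1) hi hm1h (by omega)) hlast
    have hall2m1 : ∀ x ∈ h, x ≤ 2*m - 1 := fun x hx => le_trans (hallm1 x hx) (by omega)
    set c : List ℕ := (h.map (fun x => 2*m-1 - x)).reverse with hc
    have hlenc : c.length = m := by rw [hc, List.length_reverse, List.length_map, hlenh]
    have hmemc : ∀ y ∈ c, ∃ z ∈ h, y = 2*m-1-z := by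
      intro y hy
      rw [hc, List.mem_reverse, List.mem_map] at hy
      obtain ⟨z, hz, rfl⟩ := hy
      exact ⟨z, hz, rfl⟩
    have hlen2 : (h ++ c).length = 2*m := by
      rw [List.length_append, hlenh, hlenc]; omega
    have hcgetD : ∀ i, i < m → c.getD i 0 = 2*m-1 - h.getD (m-1-i) 0 := by
      intro i hi
      have h1 : i < c.length := by omega
      have h3 : m-1-i < h.length := by omega
      rw [List.getD_eq_getElem _ 0 h1, List.getD_eq_getElem _ 0 h3,
        List.getElem_of_eq hc]
      simp only [List.getElem_reverse, List.getElem_map, List.length_map, hlenh]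
    refine ⟨h ++ c, ⟨hlen2, ⟨?_, ?_, ?_⟩, ?_⟩, ?_⟩
    · -- Sorted
      rw [List.pairwise_append]
      refine ⟨hsorth, ?_, ?_⟩
      · rw [hc, List.pairwise_reverse]
        exact List.Pairwise.map _ (fun a b hab => Nat.sub_le_sub_left hab _) hsorth
      · intro x hx y hy
        obtain ⟨z, hz, rfl⟩ := hmemc y hy
        have := hallm1 x hx
        have := hallm1 z hz
        omega
    · -- partial sums
      intro r hr hrlen
      rw [hlen2] at hrlen
      by_cases hrm : r ≤ m
      · rw [List.take_append_of_le_length (by omega)]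
        rcases Nat.eq_or_lt_of_le hrm with rfl | hlt
        · rw [List.take_of_length_le (by omega)]
          exact hsumlb
        · exact hparth r hr hlt
      · push_neg at hrm
        obtain ⟨k, rfl⟩ : ∃ k, r = m + k := ⟨r - m, by omega⟩
        have hk1 : 1 ≤ k := by omega
        have hkm : k < m := by omega
        have e1 : (h ++ c).take (m+k) = h ++ c.take k := by
          rw [← hlenh]
          rw [List.take_append, List.take_of_length_le (by omega), Nat.add_sub_cancel_left]
        rw [e1, List.sum_append]
        have e2 : c.take k = ((h.map (fun x => 2*m-1 - x)).drop (m - k)).reverse := by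
          rw [hc, List.take_reverse]
          congr 2
          rw [List.length_map, hlenh]
        have e3 : (h.map (fun x => 2*m-1 - x)).drop (m-k)
            = (h.drop (m-k)).map (fun x => 2*m-1-x) := by
          simp
        have hsums : ((h.drop (m-k)).map (fun x => 2*m-1-x)).sum + (h.drop (m-k)).sum
            = k * (2*m-1) := by
          rw [sum_map_sub_s18 _ _ (fun x hx => hall2m1 x (List.mem_of_mem_drop hx))]
          rw [List.length_drop, hlenh]
          congr 1
          omega
        have hsplit : (h.take (m-k)).sum + (h.drop (m-k)).sum = h.sum := by
          rw [← List.sum_append, List.take_append_drop]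
        have hpartmk : (m-k).choose 2 ≤ (h.take (m-k)).sum := hparth (m-k) (by omega) (by omega)
        have hcs : (m+k).choose 2 = (m-k).choose 2 + k*(2*m-1) := choose_shift m k (by omega)
        rw [e2, List.sum_reverse, e3]
        omega
    · -- total sum
      have hsumc : c.sum + h.sum = m * (2*m-1) := by
        rw [hc, List.sum_reverse, sum_map_sub_s18 _ _ hall2m1, hlenh]
      rw [List.sum_append, hlen2]
      have h2 : 2 * ((2*m).choose 2) = 2*m*(2*m-1) := by
        rw [two_mul_choose_two]
      have h3 : 2*m*(2*m-1) = 2*(m*(2*m-1)) := by ring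
      omega
    · -- IsSelfCompl
      intro i hi hi2
      rw [hlen2] at hi2 ⊢
      have him : i ≤ m := by omega
      have e1 : (h ++ c).getD (2*m - i) 0 = c.getD (m - i) 0 := by
        rw [List.getD_append_right _ _ _ _ (by rw [hlenh]; omega), hlenh]
        congr 1
        omega
      have e2 : (h ++ c).getD (i-1) 0 = h.getD (i-1) 0 :=
        List.getD_append _ _ _ _ (by rw [hlenh]; omega)
      have e3 : c.getD (m-i) 0 = 2*m-1 - h.getD (i-1) 0 := by
        rw [hcgetD (m-i) (by omega)]
        congr 2
        omega
      have hb : h.getD (i-1) 0 ≤ m - 1 := by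
        rw [List.getD_eq_getElem _ 0 (by rw [hlenh]; omega : i-1 < h.length)]
        exact hallm1 _ (List.getElem_mem _)
      rw [e1, e2, e3]
      push_cast
      omega
    · -- take m (h ++ c) = h
      show List.take m (h ++ c) = h
      rw [List.take_append_of_le_length (by omega), List.take_of_length_le (by omega)]
end
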